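/- Let f be a measure-preserving transformation on a probability space and A a measurable set with P(A) > 0. Define the first return time ρ_A(ω) = min{n ∈ ℕ : f^n(ω) ∈ A}. Then for an ergodic transformation f, the expected return time conditioned on A satisfies E[ρ_A | A] = 1/P(A) (Kac's lemma). -/

import Mathlib

open MeasureTheory Set Filter Topology

-- auxiliary: tsum of indicators
lemma kac_aux_tsum (k : ℕ) : ∑' n : ℕ, (if n < k then (1:ENNReal) else 0) = k := by
  rw [tsum_eq_sum (s := Finset.range k) (by intro b hb; simp [Finset.mem_range] at hb ⊢; omega)]
  rw [Finset.sum_ite_of_true (by intro i hi; simpa using hi)]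
  simp

/-- Kac's lemma: for an ergodic measure-preserving map `f` on a probability space
and a measurable set `A` with positive measure, the expected first return time
conditioned on `A` equals `1 / P(A)`. -/
theorem kac_lemma {Ω : Type*} [MeasurableSpace Ω] (μ : Measure Ω) [IsProbabilityMeasure μ]
    (f : Ω → Ω) (hf : Ergodic f μ) (A : Set Ω) (hA : MeasurableSet A) (hApos : 0 < μ A)
    (ρ : Ω → ℕ) (hρ : ∀ ω, ρ ω = sInf {n : ℕ | 1 ≤ n ∧ f^[n] ω ∈ A}) :
    (∫ ω in A, (ρ ω : ℝ) ∂μ) / (μ A).toReal = 1 / (μ A).toReal := by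
  have hmf : Measurable f := hf.toMeasurePreserving.measurable
  have hmfk : ∀ k : ℕ, Measurable (f^[k]) := fun k => hmf.iterate k
  -- key sets
  set D : ℕ → Set Ω := fun n => ⋂ k ≤ n, f^[k] ⁻¹' Aᶜ with hD
  set E : ℕ → Set Ω := fun n => ⋂ k ∈ Set.Icc 1 n, f^[k] ⁻¹' Aᶜ with hE
  set W : Set Ω := ⋂ k, f^[k] ⁻¹' Aᶜ with hW
  set N : Set Ω := ⋂ k ∈ Set.Ici 1, f^[k] ⁻¹' Aᶜ with hN
  have hmD : ∀ n, MeasurableSet (D n) := fun n =>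
    MeasurableSet.iInter fun k => MeasurableSet.iInter fun _ => (hmfk k) hA.compl
  have hmE : ∀ n, MeasurableSet (E n) := fun n =>
    MeasurableSet.iInter fun k => MeasurableSet.iInter fun _ => (hmfk k) hA.compl
  have hmW : MeasurableSet W := MeasurableSet.iInter fun k => (hmfk k) hA.compl
  have hmN : MeasurableSet N :=
    MeasurableSet.iInter fun k => MeasurableSet.iInter fun _ => (hmfk k) hA.compl
  -- μ W = 0 by ergodicity
  have hW0 : μ W = 0 := by
    have hUc : W = (⋃ k, f^[k] ⁻¹' A)ᶜ := by
      rw [hW, Set.compl_iUnion]; simp [Set.preimage_compl]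
    set U : Set Ω := ⋃ k, f^[k] ⁻¹' A with hU
    have hmU : MeasurableSet U := MeasurableSet.iUnion fun k => (hmfk k) hA
    have hsub : f ⁻¹' U ⊆ U := by
      rw [hU, Set.preimage_iUnion]
      refine Set.iUnion_subset fun k => ?_
      have : f ⁻¹' (f^[k] ⁻¹' A) = f^[k+1] ⁻¹' A := by
        rw [← Set.preimage_comp, ← Function.iterate_succ]
      rw [this]; exact Set.subset_iUnion (fun k => f^[k] ⁻¹' A) (k+1)
    rcases hf.ae_empty_or_univ_of_preimage_ae_le' hmU.nullMeasurableSet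
        (HasSubset.Subset.eventuallyLE hsub) (measure_ne_top μ U) with h | h
    · exfalso
      have : A ⊆ U := by
        intro ω hω
        exact Set.mem_iUnion.2 ⟨0, by simpa using hω⟩
      have hle : μ A ≤ μ U := measure_mono this
      rw [ae_eq_empty.mp h] at hle
      exact absurd (le_antisymm hle zero_le) (ne_of_gt hApos)
    · have hU1 : μ U = 1 := by
        have := measure_congr h
        simpa using this
      rw [hUc, measure_compl hmU (measure_ne_top μ U), hU1]
      simp
  -- μ N = 0
  have hNW : N = f ⁻¹' W := by
    ext ω
    simp only [hN, hW, Set.mem_iInter, Set.mem_preimage, Set.mem_Ici, Set.mem_compl_iff]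
    constructor
    · intro h k
      have := h (k+1) (by omega)
      rwa [Function.iterate_succ_apply] at this
    · intro h k hk
      obtain ⟨m, rfl⟩ : ∃ m, k = m + 1 := ⟨k - 1, by omega⟩
      rw [Function.iterate_succ_apply]
      exact h m
  have hN0 : μ N = 0 := by
    rw [hNW, hf.toMeasurePreserving.measure_preimage hmW.nullMeasurableSet, hW0]
  -- {ρ > n} = E n \ N
  have hgt : ∀ n : ℕ, {ω | n < ρ ω} = E n \ N := by
    intro n
    ext ω
    set S := {m : ℕ | 1 ≤ m ∧ f^[m] ω ∈ A} with hS
    simp only [Set.mem_setOf_eq, hρ ω, ← hS, Set.mem_diff, hE, hN, Set.mem_iInter,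
      Set.mem_preimage, Set.mem_Icc, Set.mem_Ici, Set.mem_compl_iff]
    constructor
    · intro h
      have hne : S.Nonempty := by
        by_contra hc
        rw [Set.not_nonempty_iff_eq_empty] at hc
        rw [hc, Nat.sInf_empty] at h
        omega
      constructor
      · intro k hk
        intro hmem
        have : k ∈ S := ⟨hk.1, hmem⟩
        have := Nat.sInf_le this
        omega
      · intro hall
        obtain ⟨m, hm⟩ := hne
        exact hall m hm.1 hm.2
    · rintro ⟨hE', hN'⟩
      push_neg at hN'
      obtain ⟨m, hm1, hm2⟩ := hN'
      have hne : S.Nonempty := ⟨m, hm1, hm2⟩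
      have hmem := Nat.sInf_mem hne
      by_contra hc
      push_neg at hc
      exact hE' (sInf S) ⟨hmem.1, hc⟩ hmem.2
  -- E (n+1) = f ⁻¹' (D n)
  have hEsucc : ∀ n, E (n+1) = f ⁻¹' (D n) := by
    intro n; ext ω
    simp only [hE, hD, Set.mem_iInter, Set.mem_preimage, Set.mem_Icc, Set.mem_compl_iff]
    constructor
    · intro h k hk
      have := h (k+1) ⟨by omega, by omega⟩
      rwa [Function.iterate_succ_apply] at this
    · intro h k hk
      obtain ⟨m, rfl⟩ : ∃ m, k = m+1 := ⟨k-1, by omega⟩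
      rw [Function.iterate_succ_apply]
      exact h m (by omega)
  have hsplit : ∀ n, μ (A ∩ E n) + μ (E (n+1)) = μ (E n) := by
    intro n
    have h1 : μ (E (n+1)) = μ (D n) := by
      rw [hEsucc n, hf.toMeasurePreserving.measure_preimage (hmD n).nullMeasurableSet]
    have h2 : E n = (A ∩ E n) ∪ D n := by
      ext ω
      simp only [hE, hD, Set.mem_union, Set.mem_inter_iff, Set.mem_iInter, Set.mem_preimage,
        Set.mem_Icc, Set.mem_compl_iff]
      constructor
      · intro h
        by_cases hω : ω ∈ A
        · exact Or.inl ⟨hω, h⟩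
        · refine Or.inr fun k hk => ?_
          rcases Nat.eq_zero_or_pos k with rfl | hk1
          · simpa using hω
          · exact h k ⟨hk1, hk⟩
      · rintro (⟨-, h⟩ | h) k hk
        · exact h k hk
        · exact h k hk.2
    have hdisj : Disjoint (A ∩ E n) (D n) := by
      refine Set.disjoint_left.2 fun ω hω hω' => ?_
      have h0 : ω ∉ A := by
        simp only [hD, Set.mem_iInter, Set.mem_preimage, Set.mem_compl_iff] at hω'
        simpa using hω' 0 (Nat.zero_le n)
      exact h0 hω.1
    rw [h1]
    nth_rewrite 2 [h2]
    rw [measure_union hdisj (hmD n)]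
  -- partial sums
  have hpartial : ∀ m : ℕ, (∑ n ∈ Finset.range m, μ (A ∩ E n)) + μ (E m) = 1 := by
    intro m
    induction m with
    | zero =>
      have hE0 : E 0 = Set.univ := by
        rw [hE]
        simp [Set.Icc_eq_empty (by omega : ¬ (1:ℕ) ≤ 0)]
      simp [hE0]
    | succ m ih =>
      rw [Finset.sum_range_succ, add_assoc, hsplit m, ih]
  -- ⋂ E = N
  have hEinf : ⋂ n, E n = N := by
    ext ω
    simp only [hE, hN, Set.mem_iInter, Set.mem_preimage, Set.mem_Icc, Set.mem_Ici,
      Set.mem_compl_iff]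
    constructor
    · intro h k hk; exact h k k ⟨hk, le_refl k⟩
    · intro h n k hk; exact h k hk.1
  have hanti : Antitone E := by
    intro n m hnm ω hω
    simp only [hE, Set.mem_iInter, Set.mem_compl_iff, Set.mem_preimage, Set.mem_Icc] at hω ⊢
    exact fun k hk => hω k ⟨hk.1, hk.2.trans hnm⟩
  have htend : Filter.Tendsto (fun m => μ (E m)) Filter.atTop (nhds 0) := by
    have := tendsto_measure_iInter_atTop (μ := μ) (fun n => (hmE n).nullMeasurableSet) hanti
      ⟨0, measure_ne_top μ _⟩
    rw [hEinf, hN0] at this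
    exact this
  have htsum : ∑' n, μ (A ∩ E n) = 1 := by
    have h1 : Filter.Tendsto (fun m => ∑ n ∈ Finset.range m, μ (A ∩ E n)) Filter.atTop
        (nhds (∑' n, μ (A ∩ E n))) := ENNReal.tendsto_nat_tsum _
    have h2 := h1.add htend
    rw [show (fun m => (∑ n ∈ Finset.range m, μ (A ∩ E n)) + μ (E m)) = fun _ => (1:ENNReal)
      from funext hpartial] at h2
    have := tendsto_nhds_unique h2 tendsto_const_nhds
    simpa using this
  have hmgt : ∀ n, MeasurableSet {ω | n < ρ ω} := fun n => hgt n ▸ ((hmE n).diff hmN)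
  -- the lintegral
  have hlint : (∫⁻ ω in A, (ρ ω : ENNReal) ∂μ) = 1 := by
    have hpt : ∀ ω, (ρ ω : ENNReal)
        = ∑' n : ℕ, ({ω' | n < ρ ω'}.indicator (fun _ => (1:ENNReal)) ω) := by
      intro ω
      rw [← kac_aux_tsum (ρ ω)]
      congr 1; funext n
      simp [Set.indicator_apply]
    calc (∫⁻ ω in A, (ρ ω : ENNReal) ∂μ)
        = ∫⁻ ω in A, ∑' n : ℕ, ({ω' | n < ρ ω'}.indicator (fun _ => (1:ENNReal)) ω) ∂μ :=
          lintegral_congr hpt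
      _ = ∑' n : ℕ, ∫⁻ ω in A, ({ω' | n < ρ ω'}.indicator (fun _ => (1:ENNReal)) ω) ∂μ :=
          lintegral_tsum fun n => (measurable_const.indicator (hmgt n)).aemeasurable
      _ = ∑' n : ℕ, μ (A ∩ E n) := by
          congr 1; funext n
          rw [lintegral_indicator (hmgt n), setLIntegral_one, Measure.restrict_apply (hmgt n),
            hgt n]
          have heq : (E n \ N) ∩ A = (A ∩ E n) \ N := by ext ω; simp; tauto
          rw [heq, measure_diff_null hN0]
      _ = 1 := htsum
  -- measurability of ρ
  have hmρ : Measurable ρ := by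
    apply measurable_to_countable'
    intro n
    match n with
    | 0 =>
      have : ρ ⁻¹' {0} = {ω | 0 < ρ ω}ᶜ := by ext ω; simp
      rw [this]; exact (hmgt 0).compl
    | (n+1) =>
      have : ρ ⁻¹' {n+1} = {ω | n < ρ ω} \ {ω | n+1 < ρ ω} := by
        ext ω; simp only [Set.mem_preimage, Set.mem_singleton_iff, Set.mem_diff,
          Set.mem_setOf_eq, not_lt]
        omega
      rw [this]; exact (hmgt n).diff (hmgt (n+1))
  -- conclude
  have hint : (∫ ω in A, (ρ ω : ℝ) ∂μ) = 1 := by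
    have hmc : Measurable (fun ω => (ρ ω : ℝ)) := measurable_from_nat.comp hmρ
    rw [integral_eq_lintegral_of_nonneg_ae
      (Filter.Eventually.of_forall fun ω => Nat.cast_nonneg (ρ ω))
      hmc.aestronglyMeasurable]
    have : (∫⁻ ω in A, ENNReal.ofReal ((ρ ω : ℝ)) ∂μ) = ∫⁻ ω in A, (ρ ω : ENNReal) ∂μ :=
      lintegral_congr fun ω => by simp [ENNReal.ofReal_natCast]
    rw [this, hlint, ENNReal.toReal_one]
  rw [hint]
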